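/- Let α be a measurable space, κ a Markov kernel from α to α, γ ∈ (0,1), and s ↦ ρ_s a measurable assignment of probability measures on ℝ. Let C ≥ 0 and let F₁, F₂ : α × ℝ → ℝ be jointly measurable such that for every s ∈ α, F₁(s,·), F₂(s,·) are CDFs of probability measures with F₁(s,·) − F₂(s,·) ∈ L²(ℝ) and ‖F₁(s,·) − F₂(s,·)‖_{L²(ℝ)} ≤ C. Define the CDF Bellman update (T F)(s)(x) = ∫_α ∫_ℝ F(s', (x − r)/γ) dρ_s(r) dκ(s)(s'). Then for every s ∈ α, ‖(T F₁)(s) − (T F₂)(s)‖_{L²(ℝ)} ≤ √γ · C; i.e. the CDF Bellman operator is a √γ-contraction in the supremum Cramér metric over state indices. -/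

import Mathlib

open MeasureTheory ProbabilityTheory Filter
open scoped ENNReal NNReal

/-- Jensen / Cauchy–Schwarz: the square of the norm of an integral against a probability
measure is at most the integral of the squared norms. -/
lemma sq_nnnorm_integral_le {β : Type*} [MeasurableSpace β] (μ : Measure β)
    [IsProbabilityMeasure μ] {f : β → ℝ} (hf : AEStronglyMeasurable f μ) :
    (‖∫ p, f p ∂μ‖₊ : ℝ≥0∞) ^ (2 : ℝ) ≤ ∫⁻ p, (‖f p‖₊ : ℝ≥0∞) ^ (2 : ℝ) ∂μ := by
  have h1 : (‖∫ p, f p ∂μ‖₊ : ℝ≥0∞) ≤ eLpNorm f 1 μ := by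
    rw [eLpNorm_one_eq_lintegral_enorm]
    exact enorm_integral_le_lintegral_enorm f
  have h2 : eLpNorm f 1 μ ≤ eLpNorm f 2 μ :=
    eLpNorm_le_eLpNorm_of_exponent_le one_le_two hf
  calc (‖∫ p, f p ∂μ‖₊ : ℝ≥0∞) ^ (2 : ℝ)
      ≤ eLpNorm f 2 μ ^ (2 : ℝ) := ENNReal.rpow_le_rpow (h1.trans h2) (by norm_num)
    _ = ∫⁻ p, (‖f p‖₊ : ℝ≥0∞) ^ (2 : ℝ) ∂μ := by
        rw [eLpNorm_eq_lintegral_rpow_enorm_toReal two_ne_zero ENNReal.ofNat_ne_top]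
        rw [← ENNReal.rpow_mul]
        norm_num
        rfl

/-- Change of variables `x ↦ (x - r) / γ` for lower integrals on `ℝ`. -/
lemma lintegral_comp_affine {f : ℝ → ℝ≥0∞} (hf : Measurable f) {γ : ℝ} (hγ : 0 < γ) (r : ℝ) :
    ∫⁻ x, f ((x - r) / γ) = ENNReal.ofReal γ * ∫⁻ y, f y := by
  have h1 : ∀ x : ℝ, (x - r) / γ = γ⁻¹ * (x + (-r)) := by
    intro x; rw [div_eq_inv_mul, sub_eq_add_neg]
  calc ∫⁻ x, f ((x - r) / γ)
      = ∫⁻ x, (fun y => f (γ⁻¹ * y)) (x + (-r)) := by simp_rw [h1]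
    _ = ∫⁻ x, f (γ⁻¹ * x) := by
        simpa using lintegral_add_right_eq_self (fun y => f (γ⁻¹ * y)) (-r)
    _ = ∫⁻ y, f y ∂(Measure.map (γ⁻¹ * ·) volume) :=
        (lintegral_map hf (measurable_const_mul _)).symm
    _ = ENNReal.ofReal γ * ∫⁻ y, f y := by
        rw [Real.map_volume_mul_left (inv_ne_zero hγ.ne'), inv_inv, lintegral_smul_measure,
          abs_of_pos hγ, smul_eq_mul]

/-- The CDF Bellman operator: `(T F)(s)(x) = ∫ ∫ F(s', (x - r)/γ) dρ_s(r) dκ(s)(s')`. -/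
noncomputable def bellmanCdf {α : Type*} [MeasurableSpace α]
    (κ : Kernel α α) (ρ : Kernel α ℝ) (γ : ℝ)
    (F : α → ℝ → ℝ) (s : α) (x : ℝ) : ℝ :=
  ∫ s', ∫ r, F s' ((x - r) / γ) ∂(ρ s) ∂(κ s)

/-- **The CDF Bellman operator is a `√γ`-contraction in the supremum Cramér metric.**
If `F₁, F₂` are jointly measurable CDF fields whose pointwise L² (Cramér) distances are
bounded by `C`, then for every state `s`,
`‖(T F₁)(s) - (T F₂)(s)‖_{L²} ≤ √γ · C`. -/
theorem bellmanCdf_contraction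
    {α : Type*} [MeasurableSpace α]
    (κ : Kernel α α) [IsMarkovKernel κ]
    (ρ : Kernel α ℝ) [IsMarkovKernel ρ]
    (γ : ℝ) (hγ : γ ∈ Set.Ioo (0 : ℝ) 1)
    (C : ℝ) (hC : 0 ≤ C)
    (F₁ F₂ : α → ℝ → ℝ)
    (hm₁ : Measurable (Function.uncurry F₁)) (hm₂ : Measurable (Function.uncurry F₂))
    (hcdf₁ : ∀ s, ∃ P : Measure ℝ, IsProbabilityMeasure P ∧
      ∀ x, F₁ s x = (P (Set.Iic x)).toReal)
    (hcdf₂ : ∀ s, ∃ P : Measure ℝ, IsProbabilityMeasure P ∧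
      ∀ x, F₂ s x = (P (Set.Iic x)).toReal)
    (hL2 : ∀ s, MemLp (fun x => F₁ s x - F₂ s x) 2 (volume : Measure ℝ))
    (hbound : ∀ s, eLpNorm (fun x => F₁ s x - F₂ s x) 2 volume ≤ ENNReal.ofReal C) :
    ∀ s, eLpNorm (fun x => bellmanCdf κ ρ γ F₁ s x - bellmanCdf κ ρ γ F₂ s x) 2 volume ≤
      ENNReal.ofReal (Real.sqrt γ * C) := by
  intro s
  obtain ⟨hγ0, hγ1⟩ := hγ
  set g : α → ℝ → ℝ := fun s' x => F₁ s' x - F₂ s' x with hg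
  have hgm : Measurable (Function.uncurry g) := hm₁.sub hm₂
  set μ : Measure (α × ℝ) := (κ s).prod (ρ s) with hμ
  have hμprob : IsProbabilityMeasure μ := by infer_instance
  -- boundedness of the CDFs
  have hbd : ∀ (F : α → ℝ → ℝ),
      (∀ s', ∃ P : Measure ℝ, IsProbabilityMeasure P ∧ ∀ x, F s' x = (P (Set.Iic x)).toReal) →
      ∀ s' x, ‖F s' x‖ ≤ 1 := by
    intro F hcdf s' x
    obtain ⟨P, hP, hPx⟩ := hcdf s'
    rw [hPx x, Real.norm_eq_abs, abs_of_nonneg ENNReal.toReal_nonneg]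
    exact ENNReal.toReal_le_of_le_ofReal one_pos.le (by simpa using prob_le_one)
  -- integrability over the product measure
  have hint : ∀ (F : α → ℝ → ℝ), Measurable (Function.uncurry F) →
      (∀ s' x, ‖F s' x‖ ≤ 1) →
      ∀ x : ℝ, Integrable (fun p : α × ℝ => F p.1 ((x - p.2) / γ)) μ := by
    intro F hmF hbF x
    have hmeas : Measurable (fun p : α × ℝ => F p.1 ((x - p.2) / γ)) :=
      hmF.comp (measurable_fst.prodMk ((measurable_const.sub measurable_snd).div_const γ))
    exact (integrable_const (1 : ℝ)).mono' hmeas.aestronglyMeasurable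
      (Filter.Eventually.of_forall fun p => hbF _ _)
  -- Step A : identify the difference with a single integral over the product measure
  have hstepA : ∀ x : ℝ, bellmanCdf κ ρ γ F₁ s x - bellmanCdf κ ρ γ F₂ s x =
      ∫ p, g p.1 ((x - p.2) / γ) ∂μ := by
    intro x
    have h₁ := hint F₁ hm₁ (hbd F₁ hcdf₁) x
    have h₂ := hint F₂ hm₂ (hbd F₂ hcdf₂) x
    have e₁ : bellmanCdf κ ρ γ F₁ s x = ∫ p, F₁ p.1 ((x - p.2) / γ) ∂μ :=
      (integral_integral h₁)
    have e₂ : bellmanCdf κ ρ γ F₂ s x = ∫ p, F₂ p.1 ((x - p.2) / γ) ∂μ :=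
      (integral_integral h₂)
    rw [e₁, e₂, ← integral_sub h₁ h₂]
  -- measurability of the integrand on the product
  have hgmeas : ∀ x : ℝ, Measurable (fun p : α × ℝ => g p.1 ((x - p.2) / γ)) := fun x =>
    hgm.comp (measurable_fst.prodMk ((measurable_const.sub measurable_snd).div_const γ))
  -- Step B : the L² bound
  rw [eLpNorm_eq_lintegral_rpow_enorm_toReal two_ne_zero ENNReal.ofNat_ne_top]
  have htoReal : ((2 : ℝ≥0∞).toReal) = (2 : ℝ) := by norm_num
  rw [htoReal]
  have key : (∫⁻ x, (‖bellmanCdf κ ρ γ F₁ s x - bellmanCdf κ ρ γ F₂ s x‖₊ : ℝ≥0∞) ^ (2 : ℝ)) ≤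
      ENNReal.ofReal γ * ENNReal.ofReal C ^ (2 : ℝ) := by
    have step1 : (∫⁻ x, (‖bellmanCdf κ ρ γ F₁ s x - bellmanCdf κ ρ γ F₂ s x‖₊ : ℝ≥0∞) ^ (2 : ℝ))
        ≤ ∫⁻ x, ∫⁻ p, (‖g p.1 ((x - p.2) / γ)‖₊ : ℝ≥0∞) ^ (2 : ℝ) ∂μ := by
      refine lintegral_mono fun x => ?_
      rw [hstepA x]
      exact sq_nnnorm_integral_le μ (hgmeas x).aestronglyMeasurable
    have hswapmeas : AEMeasurable (Function.uncurry fun (x : ℝ) (p : α × ℝ) =>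
        (‖g p.1 ((x - p.2) / γ)‖₊ : ℝ≥0∞) ^ (2 : ℝ)) ((volume : Measure ℝ).prod μ) := by
      apply Measurable.aemeasurable
      apply Measurable.pow_const
      apply Measurable.coe_nnreal_ennreal
      apply Measurable.nnnorm
      exact hgm.comp ((measurable_snd.fst).prodMk
        ((measurable_fst.sub measurable_snd.snd).div_const γ))
    have step2 : (∫⁻ x, ∫⁻ p, (‖g p.1 ((x - p.2) / γ)‖₊ : ℝ≥0∞) ^ (2 : ℝ) ∂μ)
        = ∫⁻ p, (∫⁻ x, (‖g p.1 ((x - p.2) / γ)‖₊ : ℝ≥0∞) ^ (2 : ℝ)) ∂μ :=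
      lintegral_lintegral_swap hswapmeas
    have step3 : ∀ p : α × ℝ,
        (∫⁻ x, (‖g p.1 ((x - p.2) / γ)‖₊ : ℝ≥0∞) ^ (2 : ℝ)) ≤
          ENNReal.ofReal γ * ENNReal.ofReal C ^ (2 : ℝ) := by
      intro p
      have hmg : Measurable fun y : ℝ => (‖g p.1 y‖₊ : ℝ≥0∞) ^ (2 : ℝ) := by
        apply Measurable.pow_const
        apply Measurable.coe_nnreal_ennreal
        apply Measurable.nnnorm
        exact hgm.comp (measurable_prodMk_left (x := p.1))
      rw [lintegral_comp_affine hmg hγ0 p.2]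
      refine mul_le_mul_right ?_ _
      have : (∫⁻ y, (‖g p.1 y‖₊ : ℝ≥0∞) ^ (2 : ℝ)) = eLpNorm (g p.1) 2 volume ^ (2 : ℝ) := by
        rw [eLpNorm_eq_lintegral_rpow_enorm_toReal two_ne_zero ENNReal.ofNat_ne_top, htoReal,
          ← ENNReal.rpow_mul]
        norm_num
        rfl
      rw [this]
      exact ENNReal.rpow_le_rpow (hbound p.1) (by norm_num)
    calc (∫⁻ x, (‖bellmanCdf κ ρ γ F₁ s x - bellmanCdf κ ρ γ F₂ s x‖₊ : ℝ≥0∞) ^ (2 : ℝ))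
        ≤ ∫⁻ p, (∫⁻ x, (‖g p.1 ((x - p.2) / γ)‖₊ : ℝ≥0∞) ^ (2 : ℝ)) ∂μ := step1.trans step2.le
      _ ≤ ∫⁻ _, ENNReal.ofReal γ * ENNReal.ofReal C ^ (2 : ℝ) ∂μ := lintegral_mono step3
      _ = ENNReal.ofReal γ * ENNReal.ofReal C ^ (2 : ℝ) := by
          rw [lintegral_const, measure_univ, mul_one]
    -- done
  calc (∫⁻ x, (‖bellmanCdf κ ρ γ F₁ s x - bellmanCdf κ ρ γ F₂ s x‖₊ : ℝ≥0∞) ^ (2 : ℝ))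
        ^ (1 / (2 : ℝ))
      ≤ (ENNReal.ofReal γ * ENNReal.ofReal C ^ (2 : ℝ)) ^ (1 / (2 : ℝ)) :=
        ENNReal.rpow_le_rpow key (by norm_num)
    _ = ENNReal.ofReal (Real.sqrt γ * C) := by
        rw [ENNReal.mul_rpow_of_nonneg _ _ (by norm_num : (0:ℝ) ≤ 1/2), ← ENNReal.rpow_mul]
        norm_num
        congr 1
        rw [Real.sqrt_eq_rpow, ← ENNReal.ofReal_rpow_of_pos hγ0]
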